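/- Let Λ be an m×m real symmetric positive semidefinite matrix, V a p'×p' real symmetric positive semidefinite matrix, Y₁ an m×n real matrix and Y₂ a p'×n real matrix. Define S₁₁ = (1/n) Λ^{1/2} Y₁ Y₁ᵀ Λ^{1/2}, S₁₂ = (1/n) Λ^{1/2} Y₁ Y₂ᵀ V^{1/2}, S₂₁ = S₁₂ᵀ, and S₂₂ = (1/n) V^{1/2} Y₂ Y₂ᵀ V^{1/2}. If ℓ ≠ 0 is not an eigenvalue of S₂₂ and not an eigenvalue of (1/n) Y₂ᵀ V Y₂, then S₁₁ + S₁₂ (ℓ I_{p'} − S₂₂)^{-1} S₂₁ = (ℓ/n) Λ^{1/2} Y₁ (ℓ I_n − (1/n) Y₂ᵀ V Y₂)^{-1} Y₁ᵀ Λ^{1/2}. -/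

import Mathlib

open MeasureTheory ProbabilityTheory Filter Matrix Topology

noncomputable section

namespace Matrix.PosSemidef
open scoped ComplexOrder
noncomputable def sqrt {n 𝕜 : Type*} [Fintype n] [DecidableEq n] [RCLike 𝕜]
    {A : Matrix n n 𝕜} (hA : PosSemidef A) : Matrix n n 𝕜 :=
  hA.1.eigenvectorUnitary.1 * diagonal ((↑) ∘ (√·) ∘ hA.1.eigenvalues) *
  (star hA.1.eigenvectorUnitary : Matrix n n 𝕜)
end Matrix.PosSemidef

lemma sqrt_mul_self12 {k : ℕ} {A : Matrix (Fin k) (Fin k) ℝ} (hA : A.PosSemidef) :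
    hA.sqrt * hA.sqrt = A := by
  conv_rhs => rw [hA.1.spectral_theorem, Unitary.conjStarAlgAut_apply]
  unfold Matrix.PosSemidef.sqrt
  have hU : (star hA.1.eigenvectorUnitary : Matrix (Fin k) (Fin k) ℝ) * hA.1.eigenvectorUnitary.1 = 1 :=
    Unitary.coe_star_mul_self _
  rw [show ∀ a b c d e f : Matrix (Fin k) (Fin k) ℝ, a * b * c * (d * e * f) = a * b * (c * d) * e * f by
    intros; simp only [Matrix.mul_assoc], hU, Matrix.mul_one]
  simp only [Matrix.mul_assoc]
  rw [← Matrix.mul_assoc (diagonal _) (diagonal _), diagonal_mul_diagonal]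
  congr 3
  funext i
  simp only [Function.comp_apply, RCLike.ofReal_real_eq_id, id]
  exact Real.mul_self_sqrt (hA.eigenvalues_nonneg i)

lemma sqrt_transpose12 {k : ℕ} {A : Matrix (Fin k) (Fin k) ℝ} (hA : A.PosSemidef) :
    hA.sqrtᵀ = hA.sqrt := by
  have h : star hA.sqrt = hA.sqrt := by
    unfold Matrix.PosSemidef.sqrt
    rw [star_mul, star_mul, star_star, Matrix.mul_assoc]
    congr 2
    rw [star_eq_conjTranspose, diagonal_conjTranspose]
    simp
  simpa [star_eq_conjTranspose, conjTranspose_eq_transpose_of_trivial] using h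

lemma aux_unit12 {k : ℕ} (ℓ : ℝ) (N : Matrix (Fin k) (Fin k) ℝ)
    (h : ∀ v : Fin k → ℝ, N.mulVec v = ℓ • v → v = 0) :
    IsUnit (ℓ • (1 : Matrix (Fin k) (Fin k) ℝ) - N) := by
  rw [← Matrix.mulVec_injective_iff_isUnit]
  intro x y hxy
  have h0 : (ℓ • (1 : Matrix (Fin k) (Fin k) ℝ) - N).mulVec (x - y) = 0 := by
    rw [Matrix.mulVec_sub, hxy, sub_self]
  rw [Matrix.sub_mulVec, Matrix.smul_mulVec, Matrix.one_mulVec, sub_eq_zero] at h0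
  exact sub_eq_zero.mp (h _ h0.symm)

/-- the block resolvent identity
`S₁₁ + S₁₂(ℓI - S₂₂)⁻¹S₂₁ = (ℓ/n) Λ^{1/2} Y₁ (ℓIₙ - (1/n) Y₂ᵀ V Y₂)⁻¹ Y₁ᵀ Λ^{1/2}`. -/
theorem statement12 (m p' n : ℕ) (hn : 0 < n)
    (Λ : Matrix (Fin m) (Fin m) ℝ) (hΛ : Λ.PosSemidef)
    (V : Matrix (Fin p') (Fin p') ℝ) (hV : V.PosSemidef)
    (Y₁ : Matrix (Fin m) (Fin n) ℝ) (Y₂ : Matrix (Fin p') (Fin n) ℝ)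
    (ℓ : ℝ) (hℓ : ℓ ≠ 0)
    (h1 : ∀ v : Fin p' → ℝ,
      ((n : ℝ)⁻¹ • (hV.sqrt * Y₂ * Y₂ᵀ * hV.sqrt)).mulVec v = ℓ • v → v = 0)
    (h2 : ∀ v : Fin n → ℝ,
      ((n : ℝ)⁻¹ • (Y₂ᵀ * V * Y₂)).mulVec v = ℓ • v → v = 0) :
    (n : ℝ)⁻¹ • (hΛ.sqrt * Y₁ * Y₁ᵀ * hΛ.sqrt) +
      ((n : ℝ)⁻¹ • (hΛ.sqrt * Y₁ * Y₂ᵀ * hV.sqrt)) *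
        (ℓ • (1 : Matrix (Fin p') (Fin p') ℝ) -
          (n : ℝ)⁻¹ • (hV.sqrt * Y₂ * Y₂ᵀ * hV.sqrt))⁻¹ *
        ((n : ℝ)⁻¹ • (hV.sqrt * Y₂ * Y₁ᵀ * hΛ.sqrt)) =
      (ℓ / (n : ℝ)) • (hΛ.sqrt * Y₁ *
        (ℓ • (1 : Matrix (Fin n) (Fin n) ℝ) - (n : ℝ)⁻¹ • (Y₂ᵀ * V * Y₂))⁻¹ *
        Y₁ᵀ * hΛ.sqrt) := by
  set L := hΛ.sqrt with hL
  set W := hV.sqrt with hWdef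
  set c : ℝ := (n : ℝ)⁻¹ with hc
  have hW : Wᵀ = W := by
    exact sqrt_transpose12 hV
  have hWW : W * W = V := sqrt_mul_self12 hV
  set A := W * Y₂ with hA
  have hAT : Aᵀ = Y₂ᵀ * W := by rw [hA, Matrix.transpose_mul, hW]
  have hAAT : W * Y₂ * Y₂ᵀ * W = A * Aᵀ := by
    rw [hAT, hA, Matrix.mul_assoc]
  have hATA : Y₂ᵀ * V * Y₂ = Aᵀ * A := by
    rw [hAT, hA, ← hWW, Matrix.mul_assoc, Matrix.mul_assoc, Matrix.mul_assoc]
  set M₂ := ℓ • (1 : Matrix (Fin p') (Fin p') ℝ) - c • (A * Aᵀ) with hM₂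
  set Mn := ℓ • (1 : Matrix (Fin n) (Fin n) ℝ) - c • (Aᵀ * A) with hMn
  have hU₂ : IsUnit M₂ := aux_unit12 ℓ _ (by rw [← hAAT]; exact h1)
  have hUn : IsUnit Mn := aux_unit12 ℓ _ (by rw [← hATA]; exact h2)
  have hdet₂ : IsUnit M₂.det := (Matrix.isUnit_iff_isUnit_det _).mp hU₂
  have hdetn : IsUnit Mn.det := (Matrix.isUnit_iff_isUnit_det _).mp hUn
  have hswapMA : M₂ * A = A * Mn := by
    rw [hM₂, hMn]
    simp [Matrix.sub_mul, Matrix.mul_sub, Matrix.smul_mul, Matrix.mul_smul, Matrix.mul_assoc]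
  have hswap : A * Mn⁻¹ = M₂⁻¹ * A := by
    have h := congrArg (fun X => M₂⁻¹ * X * Mn⁻¹) hswapMA
    simp only [Matrix.mul_assoc] at h
    rw [Matrix.nonsing_inv_mul_cancel_left _ _ hdet₂] at h
    rw [Matrix.mul_nonsing_inv _ hdetn, Matrix.mul_one] at h
    exact h
  have hkey : Aᵀ * M₂⁻¹ * A = Aᵀ * A * Mn⁻¹ := by
    rw [Matrix.mul_assoc, ← hswap, ← Matrix.mul_assoc]
  have hres : ℓ • Mn⁻¹ = 1 + c • (Aᵀ * A * Mn⁻¹) := by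
    have h1' : Mn * Mn⁻¹ = 1 := Matrix.mul_nonsing_inv _ hdetn
    rw [hMn, Matrix.sub_mul, Matrix.smul_mul, Matrix.one_mul, Matrix.smul_mul,
      sub_eq_iff_eq_add] at h1'
    rw [h1', Matrix.mul_assoc]
  -- rewrite the goal
  rw [show L * Y₁ * Y₂ᵀ * W = L * Y₁ * Aᵀ by rw [hAT, Matrix.mul_assoc, Matrix.mul_assoc],
    show W * Y₂ * Y₁ᵀ * L = A * (Y₁ᵀ * L) by rw [hA, Matrix.mul_assoc, Matrix.mul_assoc],
    hAAT, hATA, ← hM₂, ← hMn, div_eq_mul_inv, ← hc]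
  have expand : c • (L * Y₁ * Aᵀ) * M₂⁻¹ * (c • (A * (Y₁ᵀ * L)))
      = c • (L * Y₁ * (c • (Aᵀ * A * Mn⁻¹)) * (Y₁ᵀ * L)) := by
    rw [← hkey]
    simp only [Matrix.smul_mul, Matrix.mul_smul, smul_smul, Matrix.mul_assoc]
  rw [expand]
  have : (ℓ * c) • (L * Y₁ * Mn⁻¹ * Y₁ᵀ * L) = c • (L * Y₁ * (ℓ • Mn⁻¹) * (Y₁ᵀ * L)) := by
    rw [Matrix.mul_smul, Matrix.smul_mul, smul_smul, mul_comm ℓ c]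
    congr 1
    simp [Matrix.mul_assoc]
  rw [this, hres]
  simp only [Matrix.mul_add, Matrix.add_mul, Matrix.mul_one, smul_add]
  congr 1
  simp [Matrix.mul_assoc]
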